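/- Let Y ~ P be a ℤ≥0-valued random variable whose distribution P has full support on ℤ≥0, with mean λ and variance σ², and suppose E[(P(Y−1)/P(Y))²] < ∞ (with the convention P(−1) = 0). Then E[ (λ P(Y−1)/P(Y) − Y)² ] = λ² · E[ (P(Y−1)/P(Y) − 1)² ] + σ² − 2λ. That is, when Q is the point mass at 1, the Katti-Panjer information J_{Q,2}(Y) equals λ² I(Y) + (σ² − 2λ), where I(Y) = E[ (P(Y−1)/P(Y) − 1)² ] is the Johnstone–MacGibbon discrete Fisher information. -/
import Mathlib


open scoped BigOperators Classical ENNReal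

noncomputable section

/-- Point mass at `0`. -/
def delta0 : ℕ → ℝ := fun x => if x = 0 then 1 else 0

/-- Convolution of two distributions on `ℕ`. -/
def dconv (P R : ℕ → ℝ) : ℕ → ℝ := fun x => ∑ j ∈ Finset.range (x + 1), P j * R (x - j)

/-- `k`-fold convolution power of `Q` (with `Q^{*0} = δ₀`). -/
def dconvPow (Q : ℕ → ℝ) : ℕ → ℕ → ℝ
  | 0 => delta0
  | k + 1 => dconv (dconvPow Q k) Q

/-- Compound distribution `C_Q R`: the law of `X_1 + ... + X_Y` where `Y ~ R` and the
`X_i` are i.i.d. with law `Q`, independent of `Y`. -/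
def dcompound (Q R : ℕ → ℝ) : ℕ → ℝ := fun x => ∑' k, R k * dconvPow Q k x

/-- Poisson(λ) pmf. -/
def poissonPmf (l : ℝ) : ℕ → ℝ := fun k => Real.exp (-l) * l ^ k / (Nat.factorial k : ℝ)

/-- Compound Poisson distribution `CPo(λ, Q)`. -/
def cpo (l : ℝ) (Q : ℕ → ℝ) : ℕ → ℝ := dcompound Q (poissonPmf l)

/-- Bernoulli(p) pmf on `ℕ`. -/
def bern (p : ℝ) : ℕ → ℝ := fun k => if k = 0 then 1 - p else if k = 1 then p else 0

/-- Compound Bernoulli distribution `C_Q Bern(p)`, i.e. the law of `B·X` with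
`B ~ Bern(p)` independent of `X ~ Q` (where `Q` is supported on `{1,2,...}`). -/
def cbern (p : ℝ) (Q : ℕ → ℝ) : ℕ → ℝ := fun x => if x = 0 then 1 - p else p * Q x

/-- Distribution of the sum of `n` independent random variables with laws `P i`. -/
def sumDist : (n : ℕ) → (Fin n → ℕ → ℝ) → ℕ → ℝ
  | 0, _ => delta0
  | n + 1, P => dconv (sumDist n fun i => P i.castSucc) (P (Fin.last n))

/-- `P` is a probability distribution on `ℤ≥0 = {0,1,2,...}`. -/
def IsDist (P : ℕ → ℝ) : Prop := (∀ x, 0 ≤ P x) ∧ (∑' x : ℕ, P x) = 1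

/-- `Q` is a probability distribution on `ℕ = {1,2,...}`. -/
def IsDistN (Q : ℕ → ℝ) : Prop := IsDist Q ∧ Q 0 = 0

/-- Relative entropy `D(P‖R)`. -/
def relEnt (P R : ℕ → ℝ) : ℝ := ∑' x, P x * Real.log (P x / R x)

/-- Total variation distance. -/
def dTV (P R : ℕ → ℝ) : ℝ := (1 / 2) * ∑' x, |P x - R x|

/-- Mean of a distribution on `ℕ`. -/
def pmean (P : ℕ → ℝ) : ℝ := ∑' x : ℕ, (x : ℝ) * P x

/-- Size-biased distribution `R^#`. -/
def sizeBias (R : ℕ → ℝ) : ℕ → ℝ := fun y => ((y : ℝ) + 1) * R (y + 1) / pmean R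

/-- The Stein factor `H(λ, Q)`. -/
def steinFactor (l : ℝ) (Q : ℕ → ℝ) : ℝ :=
  if ∀ j : ℕ, 1 ≤ j → ((j : ℝ) + 1) * Q (j + 1) ≤ (j : ℝ) * Q j then
    if 1 ≤ (l * (Q 1 - 2 * Q 2))⁻¹ then 1
    else Real.sqrt (l * (Q 1 - 2 * Q 2))⁻¹ * (2 - Real.sqrt (l * (Q 1 - 2 * Q 2))⁻¹)
  else Real.exp l * min 1 (l * Q 1)⁻¹

/-- Distribution of the leave-one-out sum `∑_{j ≠ i} Y_j`. -/
def looDist (n : ℕ) (P : Fin n → ℕ → ℝ) (i : Fin n) : ℕ → ℝ :=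
  sumDist n (Function.update P i delta0)

/-- Size-biased score `r₁(s; P, 𝐐)` of a sum, where `Pmod i = P^{(i)}` is the law of the
sum with the `i`-th summand replaced by an independent `Y_i' ~ C_{Q_i}(R_i^#)`. -/
def score1 (n : ℕ) (p : Fin n → ℝ) (P : ℕ → ℝ) (Pmod : Fin n → ℕ → ℝ) (s : ℕ) : ℝ :=
  (∑ i : Fin n, p i * Pmod i s) / ((∑ i : Fin n, p i) * P s) - 1

/-- Size-biased information `J_{𝐐,1}(S) = λ E[r₁(S; P, 𝐐)²]`. -/
def J1 (n : ℕ) (p : Fin n → ℝ) (P : ℕ → ℝ) (Pmod : Fin n → ℕ → ℝ) : ℝ :=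
  (∑ i : Fin n, p i) * ∑' s, P s * (score1 n p P Pmod s) ^ 2

/-- Size-biased score of a single summand `Y ~ P = C_Q R`, where `Pmod = C_Q (R^#)`. -/
def score1s (P Pmod : ℕ → ℝ) (x : ℕ) : ℝ := Pmod x / P x - 1

/-- Size-biased information of a single summand: `J_{Q,1}(Y) = p E[r₁(Y; P, Q)²]`. -/
def J1s (p : ℝ) (P Pmod : ℕ → ℝ) : ℝ := p * ∑' x, P x * (score1s P Pmod x) ^ 2

/-- Katti-Panjer score `r₂(y; P, Q)` with parameter `λ`. -/
def score2 (l : ℝ) (Q P : ℕ → ℝ) (y : ℕ) : ℝ :=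
  l * (∑ j ∈ Finset.range (y + 1), (j : ℝ) * Q j * P (y - j)) / P y - (y : ℝ)

/-- Katti-Panjer information `J_{Q,2}(Y) = E[r₂(Y; P, Q)²]`. -/
def J2 (l : ℝ) (Q P : ℕ → ℝ) : ℝ := ∑' y, P y * (score2 l Q P y) ^ 2

/-- Dissimilarity measure `D(𝐐) = ∑_{j≥1} ∑_i (j pᵢ / q) |Qᵢ(j) − Q(j)|`. -/
def dissim (n : ℕ) (p : Fin n → ℝ) (Qs : Fin n → ℕ → ℝ) (Q : ℕ → ℝ) (q : ℝ) : ℝ :=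
  ∑' j : ℕ, ∑ i : Fin n, (j : ℝ) * p i / q * |Qs i j - Q j|

/-- `P(y−1)` with the convention `P(−1) = 0`. -/
def shiftD (P : ℕ → ℝ) : ℕ → ℝ := fun y => if y = 0 then 0 else P (y - 1)

/-- When `Q = δ₁`, the Katti-Panjer information equals `λ² I(Y) + (σ² − 2λ)`, where
`I(Y)` is the Johnstone–MacGibbon discrete Fisher information. -/
theorem kattiPanjer_eq_johnstoneMacGibbon
    (P : ℕ → ℝ) (hP : IsDist P) (hfull : ∀ y, 0 < P y)
    (lam σ2 : ℝ)
    (hmsum : Summable fun y : ℕ => (y : ℝ) * P y)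
    (hmean : (∑' y : ℕ, (y : ℝ) * P y) = lam)
    (hvsum : Summable fun y : ℕ => ((y : ℝ) - lam) ^ 2 * P y)
    (hvar : (∑' y : ℕ, ((y : ℝ) - lam) ^ 2 * P y) = σ2)
    (hI : Summable fun y : ℕ => P y * (shiftD P y / P y) ^ 2) :
    (∑' y : ℕ, P y * (lam * shiftD P y / P y - (y : ℝ)) ^ 2)
      = lam ^ 2 * (∑' y : ℕ, P y * (shiftD P y / P y - 1) ^ 2) + (σ2 - 2 * lam) := by
  obtain ⟨hPnn, hPsum1⟩ := hP
  have hPsumm : Summable P := by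
    by_contra h
    rw [tsum_eq_zero_of_not_summable h] at hPsum1
    norm_num at hPsum1
  set f := shiftD P with hf
  have hf0 : f 0 = 0 := by simp [hf, shiftD]
  have hfs : ∀ y : ℕ, f (y + 1) = P y := by intro y; simp [hf, shiftD]
  -- Summability and value of ∑ f
  have hsf0 : Summable f := by
    rw [← summable_nat_add_iff 1]
    simpa [hfs] using hPsumm
  have htf0 : (∑' y : ℕ, f y) = 1 := by
    rw [Summable.tsum_eq_zero_add hsf0, hf0]
    simpa [hfs] using hPsum1
  -- Summability and value of ∑ y * f y = lam + 1
  have hsf : Summable fun y : ℕ => (y : ℝ) * f y := by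
    rw [← summable_nat_add_iff 1]
    have h1 : (fun y : ℕ => ((y + 1 : ℕ) : ℝ) * f (y + 1))
        = fun y : ℕ => (y : ℝ) * P y + P y := by
      funext y; rw [hfs]; push_cast; ring
    rw [h1]
    exact hmsum.add hPsumm
  have htf : (∑' y : ℕ, (y : ℝ) * f y) = lam + 1 := by
    rw [Summable.tsum_eq_zero_add hsf]
    have h1 : (fun y : ℕ => ((y + 1 : ℕ) : ℝ) * f (y + 1))
        = fun y : ℕ => (y : ℝ) * P y + P y := by
      funext y; rw [hfs]; push_cast; ring
    rw [hf0]
    simp only [h1]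
    rw [Summable.tsum_add hmsum hPsumm, hmean, hPsum1]
    ring
  -- Summability and value of ∑ y² P y = σ2 + lam²
  have hq : (fun y : ℕ => (y : ℝ) ^ 2 * P y)
      = fun y : ℕ => (((y : ℝ) - lam) ^ 2 * P y + 2 * lam * ((y : ℝ) * P y))
        - lam ^ 2 * P y := by
    funext y; ring
  have hsq : Summable fun y : ℕ => (y : ℝ) ^ 2 * P y := by
    rw [hq]
    exact (hvsum.add (hmsum.mul_left _)).sub (hPsumm.mul_left _)
  have htq : (∑' y : ℕ, (y : ℝ) ^ 2 * P y) = σ2 + lam ^ 2 := by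
    rw [hq, Summable.tsum_sub (hvsum.add (hmsum.mul_left _)) (hPsumm.mul_left _),
      Summable.tsum_add hvsum (hmsum.mul_left _), hvar, tsum_mul_left, tsum_mul_left,
      hmean, hPsum1]
    ring
  -- pointwise identities
  have keyL : ∀ y : ℕ, P y * (lam * f y / P y - (y : ℝ)) ^ 2
      = lam ^ 2 * (P y * (f y / P y) ^ 2) - 2 * lam * ((y : ℝ) * f y)
        + (y : ℝ) ^ 2 * P y := by
    intro y
    have h := (hfull y).ne'
    field_simp
    ring
  have keyR : ∀ y : ℕ, P y * (f y / P y - 1) ^ 2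
      = P y * (f y / P y) ^ 2 - 2 * f y + P y := by
    intro y
    have h := (hfull y).ne'
    field_simp
    ring
  have hA : Summable fun y : ℕ => P y * (f y / P y) ^ 2 := hI
  -- compute both sides
  have hLHS : (∑' y : ℕ, P y * (lam * f y / P y - (y : ℝ)) ^ 2)
      = lam ^ 2 * (∑' y : ℕ, P y * (f y / P y) ^ 2) - 2 * lam * (lam + 1)
        + (σ2 + lam ^ 2) := by
    rw [tsum_congr keyL,
      Summable.tsum_add (((hA.mul_left _)).sub (hsf.mul_left _)) hsq,
      Summable.tsum_sub (hA.mul_left _) (hsf.mul_left _),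
      tsum_mul_left, tsum_mul_left, htf, htq]
  have hRHS : (∑' y : ℕ, P y * (f y / P y - 1) ^ 2)
      = (∑' y : ℕ, P y * (f y / P y) ^ 2) - 2 + 1 := by
    rw [tsum_congr keyR,
      Summable.tsum_add ((hA.sub (hsf0.mul_left 2))) hPsumm,
      Summable.tsum_sub hA (hsf0.mul_left 2), tsum_mul_left, htf0, hPsum1]
    norm_num
  rw [hLHS, hRHS]
  ring
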